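/- For all real x ≠ 0, 2·x/(sinh x) + x/(tanh x) > 3. -/

import Mathlib

open Real Set

private lemma aux_k : StrictMonoOn (fun y : ℝ => y * Real.cosh y - Real.sinh y) (Set.Ici 0) := by
  apply strictMonoOn_of_deriv_pos (convex_Ici 0)
  · fun_prop
  · intro y hy
    rw [interior_Ici] at hy
    have h : HasDerivAt (fun y : ℝ => y * Real.cosh y - Real.sinh y) (y * Real.sinh y) y := by
      have h1 : HasDerivAt (fun y : ℝ => y * Real.cosh y)
          (1 * Real.cosh y + y * Real.sinh y) y :=
        (hasDerivAt_id y).mul (Real.hasDerivAt_cosh y)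
      have := h1.sub (Real.hasDerivAt_sinh y)
      exact this.congr_deriv (by ring)
    rw [h.deriv]
    exact mul_pos hy (Real.sinh_pos_iff.2 hy)

private lemma aux_h : StrictMonoOn (fun y : ℝ => 2 - 2 * Real.cosh y + y * Real.sinh y)
    (Set.Ici 0) := by
  apply strictMonoOn_of_deriv_pos (convex_Ici 0)
  · fun_prop
  · intro y hy
    rw [interior_Ici] at hy
    have h : HasDerivAt (fun y : ℝ => 2 - 2 * Real.cosh y + y * Real.sinh y)
        (y * Real.cosh y - Real.sinh y) y := by
      have h1 : HasDerivAt (fun y : ℝ => (2:ℝ) - 2 * Real.cosh y)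
          (0 - 2 * Real.sinh y) y :=
        (hasDerivAt_const y 2).sub ((Real.hasDerivAt_cosh y).const_mul 2)
      have h2 : HasDerivAt (fun y : ℝ => y * Real.sinh y)
          (1 * Real.sinh y + y * Real.cosh y) y :=
        (hasDerivAt_id y).mul (Real.hasDerivAt_sinh y)
      have := h1.add h2
      exact this.congr_deriv (by ring)
    rw [h.deriv]
    have := aux_k (Set.self_mem_Ici) (Set.mem_Ici.2 hy.le) hy
    simpa using this
  
private lemma aux_g : ∀ x : ℝ, 0 < x → 3 * Real.sinh x < x * (2 + Real.cosh x) := by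
  have hg : StrictMonoOn (fun y : ℝ => y * (2 + Real.cosh y) - 3 * Real.sinh y)
      (Set.Ici 0) := by
    apply strictMonoOn_of_deriv_pos (convex_Ici 0)
    · fun_prop
    · intro y hy
      rw [interior_Ici] at hy
      have h : HasDerivAt (fun y : ℝ => y * (2 + Real.cosh y) - 3 * Real.sinh y)
          (2 - 2 * Real.cosh y + y * Real.sinh y) y := by
        have h1 : HasDerivAt (fun y : ℝ => (2:ℝ) + Real.cosh y) (Real.sinh y) y := by
          simpa using (Real.hasDerivAt_cosh y).const_add 2
        have h2 := ((hasDerivAt_id y).mul h1).sub ((Real.hasDerivAt_sinh y).const_mul 3)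
        exact h2.congr_deriv (by simp only [id]; ring)
      rw [h.deriv]
      have := aux_h (Set.self_mem_Ici) (Set.mem_Ici.2 hy.le) hy
      simpa using this
  intro x hx
  have := hg (Set.self_mem_Ici) (Set.mem_Ici.2 hx.le) hx
  simp only [Real.sinh_zero, Real.cosh_zero, zero_mul, mul_zero, sub_zero] at this
  linarith

private lemma aux_pos : ∀ x : ℝ, 0 < x →
    2 * (x / Real.sinh x) + x / Real.tanh x > 3 := by
  intro x hx
  have hs : 0 < Real.sinh x := Real.sinh_pos_iff.2 hx
  have hc : 0 < Real.cosh x := Real.cosh_pos x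
  rw [Real.tanh_eq_sinh_div_cosh, div_div_eq_mul_div]
  have heq : 2 * (x / Real.sinh x) + x * Real.cosh x / Real.sinh x
      = x * (2 + Real.cosh x) / Real.sinh x := by field_simp
  rw [heq, gt_iff_lt, lt_div_iff₀ hs]
  linarith [aux_g x hx]

theorem refined_huygens_hyperbolic_second (x : ℝ) (hx : x ≠ 0) :
    2 * (x / Real.sinh x) + x / Real.tanh x > 3 := by
  rcases hx.lt_or_gt with h | h
  · have := aux_pos (-x) (by linarith)
    simpa [Real.sinh_neg, Real.tanh_neg, neg_div_neg_eq] using this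
  · exact aux_pos x h
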